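/- Let F : ℝ × ℝ × ℂⁿ → ℝ be given by F(x, y, z) = x·y − Σ_k |z_k|², let A = (x_A, y_A, z_A) and B = (x_B, y_B, z_B) both lie in the convex cone where x > 0, y > 0 and F > 0, and suppose F(B) > F(A). Then there exists ε > 0 such that DF(A)·(B − εE − A) > 0, where E is the element (1, 1, 0) (i.e., translating B by −ε in both the x and y coordinates keeps it in the superlevel set {F > F(A)}), and consequently DF(A)·(B − A) ≥ ε·(y_A + x_A), where DF(A) denotes the gradient of F at A. -/

import Mathlib

theorem fder (n : ℕ) (A : ℝ × ℝ × (Fin n → ℂ)) :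
    ∃ L : (ℝ × ℝ × (Fin n → ℂ)) →L[ℝ] ℝ,
      HasFDerivAt (fun p : ℝ × ℝ × (Fin n → ℂ) => p.1 * p.2.1 - ∑ k, Complex.normSq (p.2.2 k)) L A ∧
      ∀ V, L V = A.2.1 * V.1 + A.1 * V.2.1
        - ∑ k, (2 * (A.2.2 k).re * (V.2.2 k).re + 2 * (A.2.2 k).im * (V.2.2 k).im) := by
  set e : Fin n → (ℝ × ℝ × (Fin n → ℂ)) →L[ℝ] ℂ := fun k =>
    (ContinuousLinearMap.proj k).comp ((ContinuousLinearMap.snd ℝ ℝ (Fin n → ℂ)).comp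
      (ContinuousLinearMap.snd ℝ ℝ (ℝ × (Fin n → ℂ)))) with he
  set R : Fin n → (ℝ × ℝ × (Fin n → ℂ)) →L[ℝ] ℝ := fun k => Complex.reCLM.comp (e k) with hR
  set I : Fin n → (ℝ × ℝ × (Fin n → ℂ)) →L[ℝ] ℝ := fun k => Complex.imCLM.comp (e k) with hI
  have h1 : HasFDerivAt (fun p : ℝ × ℝ × (Fin n → ℂ) => p.1)
      (ContinuousLinearMap.fst ℝ ℝ (ℝ × (Fin n → ℂ))) A := hasFDerivAt_fst
  have h2 : HasFDerivAt (fun p : ℝ × ℝ × (Fin n → ℂ) => p.2.1)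
      ((ContinuousLinearMap.fst ℝ ℝ (Fin n → ℂ)).comp
        (ContinuousLinearMap.snd ℝ ℝ (ℝ × (Fin n → ℂ)))) A :=
    hasFDerivAt_fst.comp A hasFDerivAt_snd
  have hmul := h1.mul h2
  have hek : ∀ k : Fin n, HasFDerivAt (fun p : ℝ × ℝ × (Fin n → ℂ) => p.2.2 k) (e k) A :=
    fun k => (e k).hasFDerivAt
  have hre : ∀ k : Fin n, HasFDerivAt (fun p : ℝ × ℝ × (Fin n → ℂ) => (p.2.2 k).re) (R k) A :=
    fun k => Complex.reCLM.hasFDerivAt.comp A (hek k)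
  have him : ∀ k : Fin n, HasFDerivAt (fun p : ℝ × ℝ × (Fin n → ℂ) => (p.2.2 k).im) (I k) A :=
    fun k => Complex.imCLM.hasFDerivAt.comp A (hek k)
  have hk : ∀ k ∈ Finset.univ, HasFDerivAt (fun p : ℝ × ℝ × (Fin n → ℂ) => Complex.normSq (p.2.2 k))
      (((A.2.2 k).re • R k + (A.2.2 k).re • R k) + ((A.2.2 k).im • I k + (A.2.2 k).im • I k)) A := by
    intro k _
    have := ((hre k).mul (hre k)).add ((him k).mul (him k))
    exact this.congr_of_eventuallyEq (Filter.Eventually.of_forall fun p => by simp [Complex.normSq_apply])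
  have hsum := HasFDerivAt.sum hk
  have hF := hmul.sub hsum
  refine ⟨_, hF.congr_of_eventuallyEq (Filter.Eventually.of_forall fun p => by simp [Finset.sum_apply]), fun V => ?_⟩
  simp only [ContinuousLinearMap.sub_apply, ContinuousLinearMap.add_apply,
    ContinuousLinearMap.smul_apply, ContinuousLinearMap.coe_sum', Finset.sum_apply,
    ContinuousLinearMap.coe_comp', Function.comp_apply, hR, hI, he,
    Complex.reCLM_apply, Complex.imCLM_apply, smul_eq_mul,
    ContinuousLinearMap.coe_fst', ContinuousLinearMap.coe_snd',
    ContinuousLinearMap.proj_apply]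
  have hs : ∀ k : Fin n, (A.2.2 k).re * (V.2.2 k).re + (A.2.2 k).re * (V.2.2 k).re +
      ((A.2.2 k).im * (V.2.2 k).im + (A.2.2 k).im * (V.2.2 k).im)
      = 2 * (A.2.2 k).re * (V.2.2 k).re + 2 * (A.2.2 k).im * (V.2.2 k).im := fun k => by ring
  simp_rw [hs]
  ring

theorem key (a b c d P Q S : ℝ) (ha : 0 < a) (hb : 0 < b) (hc : 0 < c) (hd : 0 < d)
    (hP : 0 ≤ P) (hQ : 0 ≤ Q) (hS : S ^ 2 ≤ P * Q) (hFA : 0 < a * b - P)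
    (hFB : a * b - P < c * d - Q) :
    2 * (a * b - P) < b * c + a * d - 2 * S := by
  set u := a * b with hu
  set v := c * d with hv
  have h1 : S ≤ Real.sqrt (P * Q) := by
    calc S ≤ |S| := le_abs_self S
    _ = Real.sqrt (S ^ 2) := (Real.sqrt_sq_eq_abs S).symm
    _ ≤ Real.sqrt (P * Q) := Real.sqrt_le_sqrt hS
  have h2 : 2 * Real.sqrt (u * v) ≤ b * c + a * d := by
    have e1 : Real.sqrt (u * v) = Real.sqrt (a * d) * Real.sqrt (b * c) := by
      rw [← Real.sqrt_mul (by positivity), hu, hv]; ring_nf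
    nlinarith [sq_nonneg (Real.sqrt (a * d) - Real.sqrt (b * c)),
      Real.sq_sqrt (show (0:ℝ) ≤ a * d by positivity),
      Real.sq_sqrt (show (0:ℝ) ≤ b * c by positivity)]
  have hQv : 0 < v - Q := by linarith
  have h3 : Real.sqrt ((u - P) * (v - Q)) + Real.sqrt (P * Q) ≤ Real.sqrt (u * v) := by
    rw [Real.le_sqrt (by positivity) (by positivity)]
    have e2 : Real.sqrt ((u - P) * (v - Q)) * Real.sqrt (P * Q)
        = Real.sqrt ((u - P) * Q) * Real.sqrt ((v - Q) * P) := by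
      rw [← Real.sqrt_mul (by positivity), ← Real.sqrt_mul (by positivity)]; ring_nf
    nlinarith [sq_nonneg (Real.sqrt ((u - P) * Q) - Real.sqrt ((v - Q) * P)),
      Real.sq_sqrt (show (0:ℝ) ≤ (u - P) * Q by positivity),
      Real.sq_sqrt (show (0:ℝ) ≤ (v - Q) * P by positivity),
      Real.sq_sqrt (show (0:ℝ) ≤ (u - P) * (v - Q) by positivity),
      Real.sq_sqrt (show (0:ℝ) ≤ P * Q by positivity)]
  have h4 : (u - P) < Real.sqrt ((u - P) * (v - Q)) := by
    have : Real.sqrt ((u - P) * (u - P)) < Real.sqrt ((u - P) * (v - Q)) := by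
      apply Real.sqrt_lt_sqrt (by positivity)
      nlinarith
    rwa [Real.sqrt_mul_self hFA.le] at this
  linarith

/-- For `F(x, y, z) = x·y − Σ|zₖ|²` and `A`, `B` in the cone `{x > 0, y > 0, F > 0}` with
`F(B) > F(A)`, there is `ε > 0` with `DF(A)·(B − εE − A) > 0` for `E = (1,1,0)`, and
consequently `DF(A)·(B − A) ≥ ε·(y_A + x_A)`. -/
theorem stmt_4 (n : ℕ) (A B : ℝ × ℝ × (Fin n → ℂ))
    (F : ℝ × ℝ × (Fin n → ℂ) → ℝ)
    (hF : F = fun p => p.1 * p.2.1 - ∑ k, Complex.normSq (p.2.2 k))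
    (hA : 0 < A.1 ∧ 0 < A.2.1 ∧ 0 < F A)
    (hB : 0 < B.1 ∧ 0 < B.2.1 ∧ 0 < F B)
    (hFBA : F A < F B) :
    ∃ ε : ℝ, 0 < ε ∧
      0 < fderiv ℝ F A (B - ε • ((1 : ℝ), (1 : ℝ), (0 : Fin n → ℂ)) - A) ∧
      ε * (A.2.1 + A.1) ≤ fderiv ℝ F A (B - A) := by
  obtain ⟨ha, hb, hFA⟩ := hA
  obtain ⟨hc, hd, hFB⟩ := hB
  obtain ⟨L, hL, hLval⟩ := fder n A
  have hfd : fderiv ℝ F A = L := by rw [hF]; exact hL.fderiv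
  set P : ℝ := ∑ k, Complex.normSq (A.2.2 k) with hPd
  set Q : ℝ := ∑ k, Complex.normSq (B.2.2 k) with hQd
  set S : ℝ := ∑ k, ((A.2.2 k).re * (B.2.2 k).re + (A.2.2 k).im * (B.2.2 k).im) with hSd
  have hP : 0 ≤ P := Finset.sum_nonneg fun k _ => Complex.normSq_nonneg _
  have hQ : 0 ≤ Q := Finset.sum_nonneg fun k _ => Complex.normSq_nonneg _
  -- Cauchy–Schwarz : S ^ 2 ≤ P * Q
  have hCS : S ^ 2 ≤ P * Q := by
    have := Finset.sum_mul_sq_le_sq_mul_sq (Finset.univ : Finset (Fin n × Bool))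
      (fun x => if x.2 then (A.2.2 x.1).re else (A.2.2 x.1).im)
      (fun x => if x.2 then (B.2.2 x.1).re else (B.2.2 x.1).im)
    simpa [Fintype.sum_prod_type, Fintype.sum_bool, Complex.normSq_apply, hSd, hPd, hQd,
      sq, add_comm, Finset.sum_add_distrib] using this
  have hFAv : F A = A.1 * A.2.1 - P := by rw [hF]
  have hFBv : F B = B.1 * B.2.1 - Q := by rw [hF]
  have hkey : 2 * (A.1 * A.2.1 - P) < A.2.1 * B.1 + A.1 * B.2.1 - 2 * S :=
    key A.1 A.2.1 B.1 B.2.1 P Q S ha hb hc hd hP hQ hCS (by rw [hFAv] at hFA; linarith)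
      (by rw [hFAv, hFBv] at hFBA; linarith)
  -- value of L on B - A
  have hval : L (B - A) = A.2.1 * B.1 + A.1 * B.2.1 - 2 * S - 2 * (A.1 * A.2.1 - P) := by
    rw [hLval (B - A)]
    simp only [Prod.fst_sub, Prod.snd_sub, Pi.sub_apply, Complex.sub_re, Complex.sub_im,
      Complex.normSq_apply, hSd, hPd]
    rw [show (∑ k, (2 * (A.2.2 k).re * ((B.2.2 k).re - (A.2.2 k).re) +
        2 * (A.2.2 k).im * ((B.2.2 k).im - (A.2.2 k).im))) =
      ∑ k, (2 * ((A.2.2 k).re * (B.2.2 k).re + (A.2.2 k).im * (B.2.2 k).im) -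
        2 * ((A.2.2 k).re * (A.2.2 k).re + (A.2.2 k).im * (A.2.2 k).im)) from
      Finset.sum_congr rfl fun k _ => by ring]
    rw [Finset.sum_sub_distrib, ← Finset.mul_sum, ← Finset.mul_sum]
    rw [show (∑ i, ((A.2.2 i).re * (B.2.2 i).re + (A.2.2 i).im * (B.2.2 i).im)) = S from rfl,
      show (∑ x, ((A.2.2 x).re * (A.2.2 x).re + (A.2.2 x).im * (A.2.2 x).im)) = P by
        rw [hPd]; exact Finset.sum_congr rfl fun k _ => (Complex.normSq_apply _).symm]
    ring
  have hδ : 0 < L (B - A) := by rw [hval]; linarith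
  have hE : L ((1 : ℝ), (1 : ℝ), (0 : Fin n → ℂ)) = A.2.1 + A.1 := by
    rw [hLval]; simp
  have hba : 0 < A.2.1 + A.1 := by linarith
  refine ⟨L (B - A) / (2 * (A.2.1 + A.1)), by positivity, ?_, ?_⟩
  · rw [hfd]
    have : B - (L (B - A) / (2 * (A.2.1 + A.1))) • ((1 : ℝ), (1 : ℝ), (0 : Fin n → ℂ)) - A
        = (B - A) - (L (B - A) / (2 * (A.2.1 + A.1))) • ((1 : ℝ), (1 : ℝ), (0 : Fin n → ℂ)) := by
      abel
    rw [this, map_sub, map_smul, hE, smul_eq_mul]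
    have : L (B - A) / (2 * (A.2.1 + A.1)) * (A.2.1 + A.1) = L (B - A) / 2 := by
      field_simp
    rw [this]; linarith
  · rw [hfd]
    have : L (B - A) / (2 * (A.2.1 + A.1)) * (A.2.1 + A.1) = L (B - A) / 2 := by
      field_simp
    rw [this]; linarith
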